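/- Let F, G be coprime completely reducible homogeneous polynomials of the same degree d ≥ 1 in R = MvPolynomial (Fin (n+1)) ℂ, and let P_1 = F, P_2 = G, P_3, …, P_k be pairwise distinct completely reducible members of the pencil 𝒫 with product Q̃ and radical Q. Then Q̃/Q divides the coefficient b_i = F·∂_iG − G·∂_iF of the 1-form ω₀ = F dG − G dF for every 0 ≤ i ≤ n; equivalently, for every linear form α occurring with multiplicity m in Q̃, the power α^{m−1} divides each b_i, so that ω = (Q/Q̃)ω₀ is a polynomial 1-form. -/

import Mathlib

open MvPolynomial

noncomputable section

/-- A linear form: a nonzero homogeneous polynomial of degree 1. -/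
def IsLinearForm (n : ℕ) (α : MvPolynomial (Fin (n + 1)) ℂ) : Prop :=
  α ≠ 0 ∧ α.IsHomogeneous 1

/-- A completely reducible polynomial: a product of linear forms. -/
def CompletelyReducible (n : ℕ) (P : MvPolynomial (Fin (n + 1)) ℂ) : Prop :=
  ∃ s : Multiset (MvPolynomial (Fin (n + 1)) ℂ),
    (∀ α ∈ s, IsLinearForm n α) ∧ P = s.prod

/-- F and G have no common non-unit factor. -/
def RelPrime (n : ℕ) (F G : MvPolynomial (Fin (n + 1)) ℂ) : Prop :=
  ∀ p : MvPolynomial (Fin (n + 1)) ℂ, p ∣ F → p ∣ G → IsUnit p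

/-- The generic fiber of the pencil generated by F and G is irreducible. -/
def GenericFiberIrreducible (n : ℕ) (F G : MvPolynomial (Fin (n + 1)) ℂ) : Prop :=
  {c : ℂ | ¬ Irreducible (F + C c * G)}.Finite

section Aux

variable {n : ℕ}

lemma degree_one_eq_single {σ : Type*} {d : σ →₀ ℕ} (h : Finsupp.degree d = 1) :
    ∃ i, d = Finsupp.single i 1 := by
  classical
  have hd0 : d ≠ 0 := by
    intro h0
    rw [h0] at h; simp at h
  obtain ⟨i, hi⟩ := Finsupp.support_nonempty_iff.mpr hd0
  refine ⟨i, ?_⟩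
  have h1 : 1 ≤ d i := Nat.one_le_iff_ne_zero.mpr (Finsupp.mem_support_iff.mp hi)
  have h2 : d i ≤ 1 := h ▸ Finsupp.le_degree i d
  have hi1 : d i = 1 := le_antisymm h2 h1
  ext j
  rcases eq_or_ne j i with rfl | hji
  · simp [hi1]
  · rw [Finsupp.single_apply, if_neg (fun hc => hji hc.symm)]
    by_contra hj
    have hjs : j ∈ d.support := Finsupp.mem_support_iff.mpr hj
    have hsub : ({i, j} : Finset σ) ⊆ d.support := by
      intro x hx
      simp only [Finset.mem_insert, Finset.mem_singleton] at hx
      rcases hx with rfl | rfl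
      · exact hi
      · exact hjs
    have hle : ∑ x ∈ ({i, j} : Finset σ), d x ≤ Finsupp.degree d :=
      Finset.sum_le_sum_of_subset hsub
    rw [Finset.sum_pair (fun hc => hji hc.symm)] at hle
    have : 1 ≤ d j := Nat.one_le_iff_ne_zero.mpr hj
    omega

lemma degree_single_one {σ : Type*} (i : σ) : Finsupp.degree (Finsupp.single i (1:ℕ)) = 1 := by
  classical
  exact Finsupp.degree_single i 1

lemma linearForm_eq_sum {α : MvPolynomial (Fin (n+1)) ℂ} (hα : α.IsHomogeneous 1) :
    α = ∑ i, C (coeff (Finsupp.single i 1) α) * X i := by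
  classical
  ext d
  rw [coeff_sum]
  by_cases hd : Finsupp.degree d = 1
  · obtain ⟨i0, rfl⟩ := degree_one_eq_single hd
    rw [Finset.sum_eq_single_of_mem i0 (Finset.mem_univ i0) ?_]
    · rw [coeff_C_mul, coeff_X', if_pos rfl, mul_one]
    · intro i _ hne
      rw [coeff_C_mul, coeff_X', if_neg, mul_zero]
      intro hc
      exact hne (Finsupp.single_left_injective one_ne_zero hc)
  · rw [hα.coeff_eq_zero hd]
    refine (Finset.sum_eq_zero fun i _ => ?_).symm
    rw [coeff_C_mul, coeff_X', if_neg, mul_zero]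
    intro hc
    exact hd (by rw [← hc]; exact degree_single_one i)

lemma exists_C_of_linear_dvd {α β : MvPolynomial (Fin (n+1)) ℂ}
    (hα : IsLinearForm n α) (hβ : β.IsHomogeneous 1) (h : α ∣ β) :
    ∃ t : ℂ, β = C t * α := by
  obtain ⟨v, rfl⟩ := h
  have hvN : ∀ e, e ≠ 0 → homogeneousComponent e v = 0 := by
    intro e he
    by_cases hle : e ≤ v.totalDegree
    · have h1 : homogeneousComponent (1 + e) (α * v) = 0 := by
        rw [homogeneousComponent_of_mem ((mem_homogeneousSubmodule _ _).mpr hβ),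
          if_neg (by omega)]
      have h2 : homogeneousComponent (1 + e) (α * v) = α * homogeneousComponent e v := by
        conv_lhs => rw [← sum_homogeneousComponent v, Finset.mul_sum, map_sum]
        rw [Finset.sum_eq_single_of_mem e (Finset.mem_range.mpr (by omega)) ?_]
        · rw [homogeneousComponent_of_mem ((mem_homogeneousSubmodule _ _).mpr
            (hα.2.mul (homogeneousComponent_isHomogeneous e v))), if_pos rfl]
        · intro i _ hie
          rw [homogeneousComponent_of_mem ((mem_homogeneousSubmodule _ _).mpr
            (hα.2.mul (homogeneousComponent_isHomogeneous i v))), if_neg (by omega)]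
      rw [h1] at h2
      exact (mul_eq_zero.mp h2.symm).resolve_left hα.1
    · exact homogeneousComponent_eq_zero _ _ (Nat.lt_of_not_le hle)
  have hv : v = C (coeff 0 v) := by
    conv_lhs => rw [← sum_homogeneousComponent v]
    rw [Finset.sum_eq_single_of_mem 0 (Finset.mem_range.mpr (by omega))
      (fun i _ hi => hvN i hi)]
    exact homogeneousComponent_zero v
  refine ⟨coeff 0 v, ?_⟩
  conv_lhs => rw [hv]
  rw [mul_comm]

lemma isLinearForm_prime {α : MvPolynomial (Fin (n+1)) ℂ} (hα : IsLinearForm n α) :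
    Prime α := by
  classical
  set a : Fin (n+1) → ℂ := fun i => coeff (Finsupp.single i 1) α with ha
  have hsum : α = ∑ i, C (a i) * X i := linearForm_eq_sum hα.2
  have hex : ∃ j, a j ≠ 0 := by
    by_contra hcon
    push_neg at hcon
    apply hα.1
    rw [hsum]
    simp [hcon]
  obtain ⟨j, hj⟩ := hex
  set S : MvPolynomial (Fin (n+1)) ℂ := ∑ i ∈ Finset.univ.erase j, C (a i) * X i with hS
  have hsum' : α = C (a j) * X j + S := by
    rw [hsum, hS, ← Finset.add_sum_erase _ _ (Finset.mem_univ j)]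
  set ψ : MvPolynomial (Fin (n+1)) ℂ →ₐ[ℂ] MvPolynomial (Fin (n+1)) ℂ :=
    aeval (fun i => if i = j then α else X i) with hψ
  set φ : MvPolynomial (Fin (n+1)) ℂ →ₐ[ℂ] MvPolynomial (Fin (n+1)) ℂ :=
    aeval (fun i => if i = j then C (a j)⁻¹ * (X j - S) else X i) with hφ
  have hψX : ψ (X j) = α := by rw [hψ, aeval_X, if_pos rfl]
  have hφX : φ (X j) = C (a j)⁻¹ * (X j - S) := by rw [hφ, aeval_X, if_pos rfl]
  have hψS : ψ S = S := by
    rw [hS, map_sum]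
    refine Finset.sum_congr rfl fun i hi => ?_
    rw [map_mul, hψ]
    rw [aeval_C, aeval_X, if_neg (Finset.ne_of_mem_erase hi), algebraMap_eq]
  have hφS : φ S = S := by
    rw [hS, map_sum]
    refine Finset.sum_congr rfl fun i hi => ?_
    rw [map_mul, hφ]
    rw [aeval_C, aeval_X, if_neg (Finset.ne_of_mem_erase hi), algebraMap_eq]
  have h1 : ψ.comp φ = AlgHom.id ℂ _ := by
    apply MvPolynomial.algHom_ext
    intro i
    rcases eq_or_ne i j with rfl | hij
    · rw [AlgHom.comp_apply, AlgHom.id_apply, hφX, map_mul, map_sub, hψX, hψS]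
      rw [hψ, aeval_C, algebraMap_eq]
      conv_lhs => rw [hsum']
      rw [add_sub_cancel_right, ← mul_assoc, ← C_mul, inv_mul_cancel₀ hj, C_1, one_mul]
    · rw [AlgHom.comp_apply, AlgHom.id_apply, hφ, aeval_X, if_neg hij, hψ, aeval_X, if_neg hij]
  have h2 : φ.comp ψ = AlgHom.id ℂ _ := by
    apply MvPolynomial.algHom_ext
    intro i
    rcases eq_or_ne i j with rfl | hij
    · rw [AlgHom.comp_apply, AlgHom.id_apply, hψX]
      conv_lhs => rw [hsum']
      rw [map_add, map_mul, hφX, hφS, hφ, aeval_C, algebraMap_eq]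
      rw [← mul_assoc, ← C_mul, mul_inv_cancel₀ hj, C_1, one_mul, sub_add_cancel]
    · rw [AlgHom.comp_apply, AlgHom.id_apply, hψ, aeval_X, if_neg hij, hφ, aeval_X, if_neg hij]
  set e : MvPolynomial (Fin (n+1)) ℂ ≃ₐ[ℂ] MvPolynomial (Fin (n+1)) ℂ :=
    AlgEquiv.ofAlgHom ψ φ h1 h2 with he
  have hXj : Prime (X j : MvPolynomial (Fin (n+1)) ℂ) := by
    have h0 : Prime (X 0 : MvPolynomial (Fin (n+1)) ℂ) := by
      rw [← MulEquiv.prime_iff (MvPolynomial.finSuccEquiv ℂ n).toMulEquiv]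
      have : (MvPolynomial.finSuccEquiv ℂ n).toMulEquiv (X 0) = Polynomial.X :=
        finSuccEquiv_X_zero
      rw [this]
      exact Polynomial.prime_X
    rw [← MulEquiv.prime_iff (renameEquiv ℂ (Equiv.swap (0 : Fin (n+1)) j)).toMulEquiv] at h0
    have : (renameEquiv ℂ (Equiv.swap (0 : Fin (n+1)) j)).toMulEquiv (X 0)
        = (X j : MvPolynomial (Fin (n+1)) ℂ) := by
      show renameEquiv ℂ (Equiv.swap (0 : Fin (n+1)) j) (X 0) = X j
      rw [renameEquiv_apply, rename_X, Equiv.swap_apply_left]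
    rwa [this] at h0
  have := (MulEquiv.prime_iff e.toMulEquiv (p := (X j : MvPolynomial (Fin (n+1)) ℂ))).mpr hXj
  have heq : e.toMulEquiv (X j : MvPolynomial (Fin (n+1)) ℂ) = α := by
    show e (X j) = α
    rw [he]
    show ψ (X j) = α
    exact hψX
  rwa [heq] at this

lemma pow_sub_one_dvd_pderiv {p P : MvPolynomial (Fin (n+1)) ℂ} {m : ℕ} (i : Fin (n+1))
    (h : p ^ m ∣ P) : p ^ (m - 1) ∣ pderiv i P := by
  obtain ⟨S, rfl⟩ := h
  rw [pderiv_mul, pderiv_pow]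
  exact dvd_add (((dvd_mul_left (p ^ (m-1)) _).mul_right _).mul_right _)
    ((pow_dvd_pow p (Nat.sub_le m 1)).mul_right _)

lemma prod_pow_dvd_of_dvd {A : Type*} [CommMonoidWithZero A] [IsCancelMulZero A] {ι : Type*} [DecidableEq ι]
    (s : Finset ι) (p : ι → A) (e : ι → ℕ) (b : A)
    (hp : ∀ i, Prime (p i)) (hnd : ∀ i j, i ≠ j → ¬ p i ∣ p j)
    (h : ∀ i, p i ^ e i ∣ b) : (∏ i ∈ s, p i ^ e i) ∣ b := by
  induction s using Finset.induction_on with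
  | empty => simpa using one_dvd b
  | @insert a s ha ih =>
    obtain ⟨v, hv⟩ := ih
    rw [Finset.prod_insert ha, hv]
    have hnd2 : ¬ p a ∣ ∏ i ∈ s, p i ^ e i := by
      intro hdvd
      obtain ⟨l, hl, hdl⟩ := (hp a).exists_mem_finset_dvd hdvd
      exact hnd a l (fun h' => ha (h' ▸ hl)) ((hp a).dvd_of_dvd_pow hdl)
    have hab : p a ^ e a ∣ (∏ i ∈ s, p i ^ e i) * v := by rw [← hv]; exact h a
    have h2 : p a ^ e a ∣ v := (hp a).pow_dvd_of_dvd_mul_left (e a) hnd2 hab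
    rw [mul_comm (p a ^ e a)]
    exact mul_dvd_mul_left _ h2

end Aux

/-- Q̃/Q divides each coefficient bᵢ = F·∂ᵢG - G·∂ᵢF of ω₀ = F dG - G dF; equivalently,
for every linear form α occurring with multiplicity m in Q̃, the power α^{m-1} divides
each bᵢ, so ω = (Q/Q̃)ω₀ is a polynomial 1-form. -/
theorem radical_quotient_divides_coefficients
    (n d k u : ℕ) (hd : 1 ≤ d) (hk : 2 ≤ k)
    (F G : MvPolynomial (Fin (n + 1)) ℂ)
    (hF : F.IsHomogeneous d) (hG : G.IsHomogeneous d)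
    (hFcr : CompletelyReducible n F) (hGcr : CompletelyReducible n G)
    (hcop : RelPrime n F G)
    (c : Fin k → ℂ × ℂ)
    (hprop : ∀ i j, i ≠ j → (c i).1 * (c j).2 ≠ (c i).2 * (c j).1)
    (P : Fin k → MvPolynomial (Fin (n + 1)) ℂ)
    (hP : ∀ i, P i = C (c i).1 * F + C (c i).2 * G)
    (hP0 : P ⟨0, by omega⟩ = F) (hP1 : P ⟨1, by omega⟩ = G)
    (hPcr : ∀ i, CompletelyReducible n (P i))
    (α : Fin u → MvPolynomial (Fin (n + 1)) ℂ)
    (hα : ∀ i, IsLinearForm n (α i))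
    (hαprop : ∀ i j, i ≠ j → ∀ t : ℂ, α i ≠ C t * α j)
    (m : Fin u → ℕ) (hm : ∀ i, 1 ≤ m i)
    (hQt : ∏ i, P i = ∏ i, α i ^ m i) :
    (∀ i, (∏ j, α j ^ (m j - 1)) ∣ (F * pderiv i G - G * pderiv i F)) ∧
    (∀ t : Fin u, ∀ i, α t ^ (m t - 1) ∣ (F * pderiv i G - G * pderiv i F)) := by
  classical
  have hpair : ∀ i j, i ≠ j → ∀ p : MvPolynomial (Fin (n+1)) ℂ,
      p ∣ P i → p ∣ P j → IsUnit p := by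
    intro i j hij p hpi hpj
    have hdet : (c i).1 * (c j).2 - (c i).2 * (c j).1 ≠ 0 := sub_ne_zero.mpr (hprop i j hij)
    have hFd : p ∣ F := by
      have hid : C ((c i).1 * (c j).2 - (c i).2 * (c j).1) * F
          = C (c j).2 * P i - C (c i).2 * P j := by
        rw [hP i, hP j]
        simp only [map_sub, map_mul]
        ring
      have h1 : p ∣ C ((c i).1 * (c j).2 - (c i).2 * (c j).1) * F := by
        rw [hid]; exact dvd_sub (hpi.mul_left _) (hpj.mul_left _)
      have h2 : F = C ((c i).1 * (c j).2 - (c i).2 * (c j).1)⁻¹ *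
          (C ((c i).1 * (c j).2 - (c i).2 * (c j).1) * F) := by
        rw [← mul_assoc, ← C_mul, inv_mul_cancel₀ hdet, C_1, one_mul]
      rw [h2]; exact h1.mul_left _
    have hGd : p ∣ G := by
      have hid : C ((c i).1 * (c j).2 - (c i).2 * (c j).1) * G
          = C (c i).1 * P j - C (c j).1 * P i := by
        rw [hP i, hP j]
        simp only [map_sub, map_mul]
        ring
      have h1 : p ∣ C ((c i).1 * (c j).2 - (c i).2 * (c j).1) * G := by
        rw [hid]; exact dvd_sub (hpj.mul_left _) (hpi.mul_left _)
      have h2 : G = C ((c i).1 * (c j).2 - (c i).2 * (c j).1)⁻¹ *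
          (C ((c i).1 * (c j).2 - (c i).2 * (c j).1) * G) := by
        rw [← mul_assoc, ← C_mul, inv_mul_cancel₀ hdet, C_1, one_mul]
      rw [h2]; exact h1.mul_left _
    exact hcop p hFd hGd
  have key : ∀ t : Fin u, ∀ i : Fin (n+1),
      α t ^ (m t - 1) ∣ (F * pderiv i G - G * pderiv i F) := by
    intro t i
    have hprime := isLinearForm_prime (hα t)
    have hdvd1 : α t ^ m t ∣ ∏ l, P l := by
      rw [hQt]; exact Finset.dvd_prod_of_mem _ (Finset.mem_univ t)
    have hdvd2 : α t ∣ ∏ l, P l :=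
      (dvd_pow_self (α t) (by have := hm t; omega)).trans hdvd1
    obtain ⟨j, -, hjd⟩ := hprime.exists_mem_finset_dvd hdvd2
    have hrest : ¬ α t ∣ ∏ l ∈ Finset.univ.erase j, P l := by
      intro h
      obtain ⟨l, hl, hld⟩ := hprime.exists_mem_finset_dvd h
      exact hprime.not_unit (hpair j l (Finset.ne_of_mem_erase hl).symm _ hjd hld)
    have hPj : α t ^ m t ∣ P j := by
      apply hprime.pow_dvd_of_dvd_mul_right (m t) hrest
      rwa [Finset.mul_prod_erase _ _ (Finset.mem_univ j)]
    obtain ⟨j', hj'⟩ : ∃ j' : Fin k, j' ≠ j := by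
      rcases eq_or_ne j ⟨0, by omega⟩ with rfl | h
      · exact ⟨⟨1, by omega⟩, by simp [Fin.ext_iff]⟩
      · exact ⟨⟨0, by omega⟩, Ne.symm h⟩
    have hdet : (c j).1 * (c j').2 - (c j').1 * (c j).2 ≠ 0 := by
      intro h0
      exact hprop j j' (Ne.symm hj') (by linear_combination h0)
    have hid : P j * pderiv i (P j') - P j' * pderiv i (P j)
        = C ((c j).1 * (c j').2 - (c j').1 * (c j).2) *
          (F * pderiv i G - G * pderiv i F) := by
      rw [hP j, hP j']
      simp only [map_add, pderiv_C_mul, map_sub, map_mul]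
      ring
    have h1 : α t ^ (m t - 1) ∣ C ((c j).1 * (c j').2 - (c j').1 * (c j).2) *
        (F * pderiv i G - G * pderiv i F) := by
      rw [← hid]
      exact dvd_sub (((pow_dvd_pow _ (Nat.sub_le _ _)).trans hPj).mul_right _)
        ((pow_sub_one_dvd_pderiv i hPj).mul_left _)
    have h2 : F * pderiv i G - G * pderiv i F
        = C ((c j).1 * (c j').2 - (c j').1 * (c j).2)⁻¹ *
          (C ((c j).1 * (c j').2 - (c j').1 * (c j).2) *
            (F * pderiv i G - G * pderiv i F)) := by
      rw [← mul_assoc, ← C_mul, inv_mul_cancel₀ hdet, C_1, one_mul]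
    rw [h2]; exact h1.mul_left _
  refine ⟨fun i => ?_, key⟩
  refine prod_pow_dvd_of_dvd _ α (fun j => m j - 1) _ (fun j => isLinearForm_prime (hα j))
    ?_ (fun t => key t i)
  intro s t hst hdvd
  obtain ⟨r, hr⟩ := exists_C_of_linear_dvd (hα s) (hα t).2 hdvd
  exact hαprop t s (Ne.symm hst) r hr
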